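/- Let F be a field of characteristic ≠ 2 and U ≠ 0 an n×n strictly lower triangular matrix over F. Then A(U) ≅ A(0_n) (via a degree-preserving isomorphism) if and only if one of the following holds: (1) u_{kj} = 0 for all 1 < j < k ≤ n; or (2) for every leader (k,j) of U with j > 1 one has 2u_{ki} + u_{kj} u_{ji} = 0 for all 1 ≤ i < j. -/

import Mathlib

open scoped BigOperators

set_option maxHeartbeats 1000000
set_option synthInstance.maxHeartbeats 400000

noncomputable section

variable {F : Type} [Field F]

/-- `T` is strictly lower triangular. -/
def SLT {n : ℕ} (T : Matrix (Fin n) (Fin n) F) : Prop :=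
  ∀ i j : Fin n, i ≤ j → T i j = 0

/-- The ideal of relations defining the nil graded algebra `A(T)`:
`X i ^ 2 = ∑ j < i, T i j * X j * X i` (for `i = 0` the sum is empty, giving `X 0 ^ 2 = 0`). -/
def ntIdeal {n : ℕ} (T : Matrix (Fin n) (Fin n) F) : Ideal (MvPolynomial (Fin n) F) :=
  Ideal.span {p | ∃ i : Fin n,
    p = MvPolynomial.X i ^ 2 -
      ∑ j ∈ Finset.univ.filter (fun j => j < i),
        MvPolynomial.C (T i j) * MvPolynomial.X j * MvPolynomial.X i}

/-- The nil graded algebra `A(T)` associated to the strictly lower triangular matrix `T`. -/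
abbrev NTAlg {n : ℕ} (T : Matrix (Fin n) (Fin n) F) : Type :=
  MvPolynomial (Fin n) F ⧸ ntIdeal T

/-- The generator `X i` of `A(T)`. -/
def ntGen {n : ℕ} (T : Matrix (Fin n) (Fin n) F) (i : Fin n) : NTAlg T :=
  Ideal.Quotient.mk (ntIdeal T) (MvPolynomial.X i)

/-- There is a degree-preserving isomorphism `A(T) → A(S)`, i.e. an algebra isomorphism
sending each generator to an `F`-linear combination of the generators of the target. -/
def NTIso {n : ℕ} (T S : Matrix (Fin n) (Fin n) F) : Prop :=
  ∃ e : NTAlg T ≃ₐ[F] NTAlg S, ∃ Γ : Matrix (Fin n) (Fin n) F,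
    ∀ j : Fin n, e (ntGen T j) = ∑ i : Fin n, Γ i j • ntGen S i

/-- `(k, j)` is a leader of `U`: the last nonzero entry of row `k` is in column `j`. -/
def IsLeader {n : ℕ} (U : Matrix (Fin n) (Fin n) F) (k j : Fin n) : Prop :=
  U k j ≠ 0 ∧ ∀ c : Fin n, j < c → U k c = 0

-- ################ auxiliary development ################

lemma finStrong {n : ℕ} {C : Fin n → Prop} (h : ∀ i : Fin n, (∀ j, j < i → C j) → C i)
    (k : Fin n) : C k := by
  suffices H : ∀ m : ℕ, ∀ k : Fin n, k.val < m → C k from H n k k.isLt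
  intro m
  induction m with
  | zero => exact fun k hk => absurd hk (Nat.not_lt_zero _)
  | succ m ih =>
    intro k hk
    exact h k fun j hj => ih j (by have := hj; rw [Fin.lt_def] at this; omega)

lemma ntGen_sq {n : ℕ} (T : Matrix (Fin n) (Fin n) F) (i : Fin n) :
    ntGen T i ^ 2 = ∑ j ∈ Finset.univ.filter (fun j => j < i),
      algebraMap F (NTAlg T) (T i j) * (ntGen T j * ntGen T i) := by
  have hmem : (MvPolynomial.X i ^ 2 -
      ∑ j ∈ Finset.univ.filter (fun j => j < i),
        MvPolynomial.C (T i j) * MvPolynomial.X j * MvPolynomial.X i) ∈ ntIdeal T :=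
    Ideal.subset_span ⟨i, rfl⟩
  have h0 : Ideal.Quotient.mk (ntIdeal T) (MvPolynomial.X i ^ 2 -
      ∑ j ∈ Finset.univ.filter (fun j => j < i),
        MvPolynomial.C (T i j) * MvPolynomial.X j * MvPolynomial.X i) = 0 :=
    Ideal.Quotient.eq_zero_iff_mem.mpr hmem
  rw [map_sub, map_pow, map_sum, sub_eq_zero] at h0
  show (Ideal.Quotient.mk (ntIdeal T) (MvPolynomial.X i))^2 = _
  rw [h0]
  refine Finset.sum_congr rfl fun j _ => ?_
  rw [map_mul, map_mul, mul_assoc]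
  rfl

lemma ntGen_sq_univ {n : ℕ} (U : Matrix (Fin n) (Fin n) F) (hU : SLT U) (i : Fin n) :
    ntGen U i ^ 2 = ∑ j : Fin n, algebraMap F (NTAlg U) (U i j) * (ntGen U j * ntGen U i) := by
  rw [ntGen_sq]
  refine Finset.sum_subset (Finset.filter_subset _ _) fun j _ hj => ?_
  rw [Finset.mem_filter] at hj
  have : U i j = 0 := hU i j (le_of_not_gt (by simpa using hj))
  simp [this]

lemma ntGen_zero_sq {n : ℕ} (i : Fin n) :
    ntGen (0 : Matrix (Fin n) (Fin n) F) i ^ 2 = 0 := by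
  rw [ntGen_sq]
  simp

example : True := trivial

section Aux

variable {n : ℕ} {A : Type} [CommRing A] [Algebra F A]

lemma lin_matrix (P Q : Matrix (Fin n) (Fin n) F) (v : Fin n → A) (k : Fin n) :
    ∑ l, algebraMap F A (P k l) * (∑ m, algebraMap F A (Q l m) * v m)
      = ∑ m, algebraMap F A ((P * Q) k m) * v m := by
  simp_rw [Finset.mul_sum, ← mul_assoc, ← map_mul]
  rw [Finset.sum_comm]
  simp_rw [Matrix.mul_apply, map_sum, Finset.sum_mul]

lemma lin_one (v : Fin n → A) (k : Fin n) :
    ∑ m, algebraMap F A ((1 : Matrix (Fin n) (Fin n) F) k m) * v m = v k := by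
  simp [Matrix.one_apply, apply_ite (algebraMap F A)]

lemma lin_Zdef (U : Matrix (Fin n) (Fin n) F) (v : Fin n → A) (k : Fin n) :
    ∑ l, algebraMap F A ((1 - (2:F)⁻¹ • U) k l) * v l
      = v k - algebraMap F A (2:F)⁻¹ * ∑ l, algebraMap F A (U k l) * v l := by
  simp_rw [Matrix.sub_apply, Matrix.smul_apply, smul_eq_mul, map_sub, map_mul, sub_mul,
    Finset.sum_sub_distrib, Finset.mul_sum, mul_assoc]
  rw [lin_one]

lemma row_eq_mul {U : Matrix (Fin n) (Fin n) F} (h2 : (2:F) ≠ 0) (hU : SLT U) {k j : Fin n}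
    (hl : IsLeader U k j) (hc : ∀ i : Fin n, i < j → 2 * U k i + U k j * U j i = 0)
    (l : Fin n) : U k l = U k j * ((1 - (2:F)⁻¹ • U) j l) := by
  rcases lt_trichotomy l j with h | h | h
  · have hjl : j ≠ l := (ne_of_lt h).symm
    have := hc l h
    simp only [Matrix.sub_apply, Matrix.one_apply, Matrix.smul_apply, smul_eq_mul,
      if_neg hjl]
    have h21 : (2:F)⁻¹ * 2 = 1 := inv_mul_cancel₀ h2
    linear_combination ((2:F)⁻¹) * this - U k l * h21
  · subst h
    have h0 : U l l = 0 := hU l l le_rfl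
    simp [Matrix.one_apply, h0]
  · have h1 : U k l = 0 := hl.2 l h
    have h2' : U j l = 0 := hU j l h.le
    have hjl : j ≠ l := ne_of_lt h
    simp [Matrix.one_apply, h1, h2', hjl]

lemma rowsum {U : Matrix (Fin n) (Fin n) F} (h2 : (2:F) ≠ 0) (hU : SLT U) {k j : Fin n}
    (hl : IsLeader U k j) (hc : ∀ i : Fin n, i < j → 2 * U k i + U k j * U j i = 0)
    (v : Fin n → A) :
    ∑ l, algebraMap F A (U k l) * v l
      = algebraMap F A (U k j) * ∑ l, algebraMap F A ((1 - (2:F)⁻¹ • U) j l) * v l := by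
  rw [Finset.mul_sum]
  refine Finset.sum_congr rfl fun l _ => ?_
  rw [row_eq_mul h2 hU hl hc l, map_mul, mul_assoc]

lemma exists_leader {U : Matrix (Fin n) (Fin n) F} {k : Fin n} (h : ∃ l, U k l ≠ 0) :
    ∃ j, IsLeader U k j := by
  classical
  obtain ⟨l0, hl0⟩ := h
  set s : Finset (Fin n) := Finset.univ.filter (fun l => U k l ≠ 0) with hs
  have hne : s.Nonempty := ⟨l0, by simp [hs, hl0]⟩
  refine ⟨s.max' hne, ?_, fun c hc => ?_⟩
  · have := s.max'_mem hne
    simp [hs] at this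
    exact this
  · by_contra h0
    have hcs : c ∈ s := by simp [hs, h0]
    exact absurd (s.le_max' c hcs) (not_le.mpr hc)

lemma lt_of_entry_ne {U : Matrix (Fin n) (Fin n) F} (hU : SLT U) {k j : Fin n}
    (h : U k j ≠ 0) : j < k :=
  not_le.mp fun hkj => h (hU k j hkj)

/-- condition (2) of the theorem -/
def Cond2 {n : ℕ} (U : Matrix (Fin n) (Fin n) F) : Prop :=
  ∀ k j : Fin n, IsLeader U k j → 0 < j.val →
    ∀ i : Fin n, i < j → 2 * U k i + U k j * U j i = 0

lemma cond2_leader {U : Matrix (Fin n) (Fin n) F} (hC : Cond2 U) {k j : Fin n}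
    (hl : IsLeader U k j) : ∀ i : Fin n, i < j → 2 * U k i + U k j * U j i = 0 := by
  intro i hi
  have hj : 0 < j.val := by
    have := hi
    rw [Fin.lt_def] at this
    omega
  exact hC k j hl hj i hi

lemma two_alg (h2 : (2:F) ≠ 0) : (2:A) * algebraMap F A (2:F)⁻¹ = 1 := by
  rw [show (2:A) = algebraMap F A (2:F) from (map_ofNat _ 2).symm, ← map_mul,
    mul_inv_cancel₀ h2, map_one]

lemma keyU {U : Matrix (Fin n) (Fin n) F} (h2 : (2:F) ≠ 0) (hU : SLT U) (hC : Cond2 U)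
    (k : Fin n) :
    (∑ l, algebraMap F (NTAlg U) ((1 - (2:F)⁻¹ • U) k l) * ntGen U l) ^ 2 = 0 := by
  induction k using finStrong with
  | _ k IH =>
  have hx : ntGen U k ^ 2 = (∑ l, algebraMap F (NTAlg U) (U k l) * ntGen U l) * ntGen U k := by
    rw [ntGen_sq_univ U hU k, Finset.sum_mul]
    simp_rw [mul_assoc]
  have hS2 : (∑ l, algebraMap F (NTAlg U) (U k l) * ntGen U l) ^ 2 = 0 := by
    by_cases hrow : ∀ l, U k l = 0
    · have : (∑ l, algebraMap F (NTAlg U) (U k l) * ntGen U l) = 0 := by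
        simp [hrow]
      rw [this]; ring
    · push_neg at hrow
      obtain ⟨j, hl⟩ := exists_leader hrow
      have hjk : j < k := lt_of_entry_ne hU hl.1
      rw [rowsum h2 hU hl (cond2_leader hC hl), mul_pow, IH j hjk, mul_zero]
  rw [lin_Zdef]
  linear_combination hx + (algebraMap F (NTAlg U) (2:F)⁻¹)^2 * hS2
    - (∑ l, algebraMap F (NTAlg U) (U k l) * ntGen U l) * ntGen U k * two_alg (A := NTAlg U) h2

end Aux

example : True := trivial

section Forward

variable {n : ℕ}

def Mmat (U : Matrix (Fin n) (Fin n) F) : Matrix (Fin n) (Fin n) F := 1 - (2:F)⁻¹ • U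

def Zvec (U : Matrix (Fin n) (Fin n) F) : Fin n → NTAlg U :=
  fun k => ∑ l, algebraMap F (NTAlg U) (Mmat U k l) * ntGen U l

def Wvec (U : Matrix (Fin n) (Fin n) F) : Fin n → NTAlg (0 : Matrix (Fin n) (Fin n) F) :=
  fun k => ∑ l, algebraMap F (NTAlg (0 : Matrix (Fin n) (Fin n) F)) ((Mmat U)⁻¹ k l) *
    ntGen (0 : Matrix (Fin n) (Fin n) F) l

lemma Mmat_det (U : Matrix (Fin n) (Fin n) F) (hU : SLT U) : IsUnit (Mmat U).det := by
  have hbt : (Mmat U).BlockTriangular OrderDual.toDual := by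
    intro i j hij
    have h1 : i < j := hij
    simp [Mmat, Matrix.one_apply, ne_of_lt h1, hU i j h1.le]
  rw [Matrix.det_of_lowerTriangular _ hbt]
  have hdiag : ∀ i, Mmat U i i = 1 := fun i => by simp [Mmat, hU i i le_rfl]
  simp [hdiag]

lemma Zvec_sq (U : Matrix (Fin n) (Fin n) F) (h2 : (2:F) ≠ 0) (hU : SLT U) (hC : Cond2 U)
    (k : Fin n) : Zvec U k ^ 2 = 0 :=
  keyU h2 hU hC k

lemma MW_eq (U : Matrix (Fin n) (Fin n) F) (hU : SLT U) (k : Fin n) :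
    ∑ l, algebraMap F (NTAlg (0 : Matrix (Fin n) (Fin n) F)) (Mmat U k l) * Wvec U l
      = ntGen (0 : Matrix (Fin n) (Fin n) F) k := by
  rw [show Wvec U = fun l => ∑ m, algebraMap F (NTAlg (0 : Matrix (Fin n) (Fin n) F))
    ((Mmat U)⁻¹ l m) * ntGen (0 : Matrix (Fin n) (Fin n) F) m from rfl]
  rw [lin_matrix, Matrix.mul_nonsing_inv _ (Mmat_det U hU), lin_one]

lemma Tvec_sq (U : Matrix (Fin n) (Fin n) F) (h2 : (2:F) ≠ 0) (hU : SLT U) (hC : Cond2 U)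
    (k : Fin n) :
    (∑ l, algebraMap F (NTAlg (0 : Matrix (Fin n) (Fin n) F)) (U k l) * Wvec U l) ^ 2 = 0 := by
  by_cases hrow : ∀ l, U k l = 0
  · have h0 : (∑ l, algebraMap F (NTAlg (0 : Matrix (Fin n) (Fin n) F)) (U k l) * Wvec U l)
        = 0 := by simp [hrow]
    rw [h0]; ring
  · push_neg at hrow
    obtain ⟨j, hl⟩ := exists_leader hrow
    rw [rowsum h2 hU hl (cond2_leader hC hl)]
    rw [show (1 - (2:F)⁻¹ • U) = Mmat U from rfl, MW_eq U hU, mul_pow, ntGen_zero_sq, mul_zero]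

lemma Wvec_rel (U : Matrix (Fin n) (Fin n) F) (h2 : (2:F) ≠ 0) (hU : SLT U) (hC : Cond2 U)
    (k : Fin n) :
    Wvec U k ^ 2 = ∑ l, algebraMap F (NTAlg (0 : Matrix (Fin n) (Fin n) F)) (U k l) *
      (Wvec U l * Wvec U k) := by
  have hWdef : Wvec U k = ntGen (0 : Matrix (Fin n) (Fin n) F) k +
      algebraMap F _ (2:F)⁻¹ * ∑ l, algebraMap F _ (U k l) * Wvec U l := by
    have := MW_eq U hU k
    rw [show Mmat U = 1 - (2:F)⁻¹ • U from rfl, lin_Zdef] at this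
    linear_combination this
  have hy : ntGen (0 : Matrix (Fin n) (Fin n) F) k ^ 2 = 0 := ntGen_zero_sq k
  have hT2 := Tvec_sq U h2 hU hC k
  have h21 := two_alg (A := NTAlg (0 : Matrix (Fin n) (Fin n) F)) h2
  have hsm : (∑ l, algebraMap F (NTAlg (0 : Matrix (Fin n) (Fin n) F)) (U k l) *
      (Wvec U l * Wvec U k)) = (∑ l, algebraMap F (NTAlg (0 : Matrix (Fin n) (Fin n) F)) (U k l) *
      Wvec U l) * Wvec U k := by
    rw [Finset.sum_mul]; simp_rw [mul_assoc]
  rw [hsm, hWdef]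
  linear_combination hy + (ntGen (0 : Matrix (Fin n) (Fin n) F) k *
      (∑ l, algebraMap F (NTAlg (0 : Matrix (Fin n) (Fin n) F)) (U k l) * Wvec U l)) * h21
    + ((algebraMap F (NTAlg (0 : Matrix (Fin n) (Fin n) F)) (2:F)⁻¹)^2
       - algebraMap F (NTAlg (0 : Matrix (Fin n) (Fin n) F)) (2:F)⁻¹) * hT2


lemma aevalZ_ker (U : Matrix (Fin n) (Fin n) F) (h2 : (2:F) ≠ 0) (hU : SLT U) (hC : Cond2 U) :
    ∀ p ∈ ntIdeal (0 : Matrix (Fin n) (Fin n) F), MvPolynomial.aeval (Zvec U) p = 0 := by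
  intro p hp
  have hle : ntIdeal (0 : Matrix (Fin n) (Fin n) F) ≤
      RingHom.ker (MvPolynomial.aeval (R := F) (Zvec U)).toRingHom := by
    rw [ntIdeal, Ideal.span_le]
    rintro p ⟨i, rfl⟩
    simp only [SetLike.mem_coe, RingHom.mem_ker, AlgHom.toRingHom_eq_coe, RingHom.coe_coe,
      map_sub, map_pow, map_sum, map_mul, MvPolynomial.aeval_X, MvPolynomial.aeval_C,
      Matrix.zero_apply, map_zero, zero_mul, Finset.sum_const_zero, sub_zero]
    exact Zvec_sq U h2 hU hC i
  exact hle hp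

lemma aevalW_ker (U : Matrix (Fin n) (Fin n) F) (h2 : (2:F) ≠ 0) (hU : SLT U) (hC : Cond2 U) :
    ∀ p ∈ ntIdeal U, MvPolynomial.aeval (Wvec U) p = 0 := by
  intro p hp
  have hle : ntIdeal U ≤ RingHom.ker (MvPolynomial.aeval (R := F) (Wvec U)).toRingHom := by
    rw [ntIdeal, Ideal.span_le]
    rintro p ⟨i, rfl⟩
    simp only [SetLike.mem_coe, RingHom.mem_ker, AlgHom.toRingHom_eq_coe, RingHom.coe_coe,
      map_sub, map_pow, map_sum, map_mul, MvPolynomial.aeval_X, MvPolynomial.aeval_C]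
    rw [sub_eq_zero, Wvec_rel U h2 hU hC i]
    simp_rw [← mul_assoc]
    refine (Finset.sum_subset (Finset.filter_subset _ _) fun j _ hj => ?_).symm
    have : U i j = 0 := hU i j (le_of_not_gt fun hlt =>
      hj (Finset.mem_filter.mpr ⟨Finset.mem_univ _, hlt⟩))
    simp [this]
  exact hle hp

theorem forward_iso (U : Matrix (Fin n) (Fin n) F) (h2 : (2:F) ≠ 0) (hU : SLT U)
    (hC : Cond2 U) : NTIso (0 : Matrix (Fin n) (Fin n) F) U := by
  classical
  have hdet := Mmat_det U hU
  set φ : NTAlg (0 : Matrix (Fin n) (Fin n) F) →ₐ[F] NTAlg U :=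
    Ideal.Quotient.liftₐ _ (MvPolynomial.aeval (Zvec U)) (aevalZ_ker U h2 hU hC) with hφ
  set ψ : NTAlg U →ₐ[F] NTAlg (0 : Matrix (Fin n) (Fin n) F) :=
    Ideal.Quotient.liftₐ _ (MvPolynomial.aeval (Wvec U)) (aevalW_ker U h2 hU hC) with hψ
  have hφgen : ∀ i, φ (ntGen (0 : Matrix (Fin n) (Fin n) F) i) = Zvec U i := by
    intro i
    rw [hφ, ntGen]
    rw [Ideal.Quotient.liftₐ_apply]
    exact MvPolynomial.aeval_X _ _
  have hψgen : ∀ i, ψ (ntGen U i) = Wvec U i := by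
    intro i
    rw [hψ, ntGen]
    rw [Ideal.Quotient.liftₐ_apply]
    exact MvPolynomial.aeval_X _ _
  have hψZ : ∀ i, ψ (Zvec U i) = ntGen (0 : Matrix (Fin n) (Fin n) F) i := by
    intro i
    rw [Zvec, map_sum]
    simp_rw [map_mul, AlgHom.commutes, hψgen]
    exact MW_eq U hU i
  have hφW : ∀ i, φ (Wvec U i) = ntGen U i := by
    intro i
    rw [Wvec, map_sum]
    simp_rw [map_mul, AlgHom.commutes, hφgen]
    rw [show (Zvec U) = fun l => ∑ m, algebraMap F (NTAlg U) (Mmat U l m) * ntGen U m from rfl,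
      lin_matrix, Matrix.nonsing_inv_mul _ hdet, lin_one]
  have hcomp1 : φ.comp ψ = AlgHom.id F (NTAlg U) := by
    apply Ideal.Quotient.algHom_ext
    apply MvPolynomial.algHom_ext
    intro i
    simp only [AlgHom.coe_comp, Function.comp_apply, Ideal.Quotient.mkₐ_eq_mk,
      AlgHom.coe_id, id_eq]
    rw [show (Ideal.Quotient.mk (ntIdeal U)) (MvPolynomial.X i) = ntGen U i from rfl,
      hψgen, hφW]
  have hcomp2 : ψ.comp φ = AlgHom.id F (NTAlg (0 : Matrix (Fin n) (Fin n) F)) := by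
    apply Ideal.Quotient.algHom_ext
    apply MvPolynomial.algHom_ext
    intro i
    simp only [AlgHom.coe_comp, Function.comp_apply, Ideal.Quotient.mkₐ_eq_mk,
      AlgHom.coe_id, id_eq]
    rw [show (Ideal.Quotient.mk (ntIdeal (0 : Matrix (Fin n) (Fin n) F))) (MvPolynomial.X i)
        = ntGen (0 : Matrix (Fin n) (Fin n) F) i from rfl, hφgen, hψZ]
  refine ⟨AlgEquiv.ofAlgHom φ ψ hcomp1 hcomp2, Matrix.transpose (Mmat U), fun j => ?_⟩
  show φ (ntGen (0 : Matrix (Fin n) (Fin n) F) j) = _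
  rw [hφgen, Zvec]
  refine Finset.sum_congr rfl fun i _ => ?_
  rw [Matrix.transpose_apply]
  exact (Algebra.smul_def _ _).symm

end Forward

section Reverse

open TrivSqZeroExt

def sB (F : Type) [Field F] : DualNumber (DualNumber F) := inl DualNumber.eps
def tB (F : Type) [Field F] : DualNumber (DualNumber F) := DualNumber.eps

lemma sB_sq : sB F * sB F = 0 := by
  rw [sB, inl_mul_inl, DualNumber.eps_mul_eps, inl_zero]
lemma tB_sq : tB F * tB F = 0 := DualNumber.eps_mul_eps
lemma sB_tB : sB F * tB F = inr DualNumber.eps := by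
  rw [sB, tB, show (DualNumber.eps : DualNumber (DualNumber F))
    = TrivSqZeroExt.inr (1 : DualNumber F) from rfl, inl_mul_inr, smul_eq_mul, mul_one]
lemma p_smul (c : F) (h : c • (sB F * tB F) = 0) : c = 0 := by
  rw [sB_tB] at h
  have h1 := congrArg TrivSqZeroExt.snd h
  rw [TrivSqZeroExt.snd_smul, TrivSqZeroExt.snd_inr, TrivSqZeroExt.snd_zero] at h1
  have h2 := congrArg TrivSqZeroExt.snd h1
  rw [TrivSqZeroExt.snd_smul, DualNumber.snd_eps] at h2
  simpa using h2

variable {n : ℕ}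

lemma dd_smul_def (c : F) (x : DualNumber (DualNumber F)) :
    c • x = algebraMap F (DualNumber (DualNumber F)) c * x :=
  Algebra.smul_def c x

def Bv (U : Matrix (Fin n) (Fin n) F) (l i : Fin n) : Fin n → DualNumber (DualNumber F) :=
  fun m => if m = l then sB F else if m = i then
    tB F + algebraMap F (DualNumber (DualNumber F)) ((2:F)⁻¹ * U i l) * sB F else 0

lemma Bv_ker (U : Matrix (Fin n) (Fin n) F) (h2 : (2:F) ≠ 0) {l i : Fin n} (hli : l < i) :
    ∀ p ∈ ntIdeal U, MvPolynomial.aeval (Bv U l i) p = 0 := by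
  intro p hp
  have hle : ntIdeal U ≤ RingHom.ker (MvPolynomial.aeval (R := F) (Bv U l i)).toRingHom := by
    rw [ntIdeal, Ideal.span_le]
    rintro p ⟨m, rfl⟩
    simp only [SetLike.mem_coe, RingHom.mem_ker, AlgHom.toRingHom_eq_coe, RingHom.coe_coe,
      map_sub, map_pow, map_sum, map_mul, MvPolynomial.aeval_X, MvPolynomial.aeval_C]
    rw [sub_eq_zero]
    rcases eq_or_ne m l with rfl | hml
    · have hsum : ∀ j ∈ Finset.univ.filter (fun j => j < m),
          algebraMap F (DualNumber (DualNumber F)) (U m j) * Bv U m i j * Bv U m i m = 0 := by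
        intro j hj
        rw [Finset.mem_filter] at hj
        have hjl : j ≠ m := ne_of_lt hj.2
        have hji : j ≠ i := ne_of_lt (hj.2.trans hli)
        rw [Bv]
        simp [hjl, hji]
      rw [Finset.sum_eq_zero hsum]
      rw [show Bv U m i m = sB F by rw [Bv]; simp]
      rw [sq, sB_sq]
    · rcases eq_or_ne m i with rfl | hmi
      · have hil : m ≠ l := ne_of_gt hli
        have hBi : Bv U l m m = tB F
            + algebraMap F (DualNumber (DualNumber F)) ((2:F)⁻¹ * U m l) * sB F := by
          rw [Bv]; simp [hil]
        have hBl : Bv U l m l = sB F := by rw [Bv]; simp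
        have hsum : ∑ j ∈ Finset.univ.filter (fun j => j < m),
            algebraMap F (DualNumber (DualNumber F)) (U m j) * Bv U l m j * Bv U l m m
            = algebraMap F (DualNumber (DualNumber F)) (U m l) * sB F * Bv U l m m := by
          have hone : ∀ j ∈ Finset.univ.filter (fun j => j < m), j ≠ l →
              algebraMap F (DualNumber (DualNumber F)) (U m j) * Bv U l m j * Bv U l m m = 0 := by
            intro j hj hjl
            rw [Finset.mem_filter] at hj
            have hji : j ≠ m := ne_of_lt hj.2
            rw [Bv]
            simp [hjl, hji]
          rw [Finset.sum_eq_single_of_mem l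
            (show l ∈ Finset.univ.filter (fun j => j < m) from
              Finset.mem_filter.mpr ⟨Finset.mem_univ l, hli⟩) hone, hBl]
        rw [hsum, hBi]
        have h22 : algebraMap F (DualNumber (DualNumber F)) (2:F)
            = (2 : DualNumber (DualNumber F)) := map_ofNat _ 2
        have h2c : (2 : DualNumber (DualNumber F)) *
            algebraMap F (DualNumber (DualNumber F)) ((2:F)⁻¹ * U m l)
            = algebraMap F (DualNumber (DualNumber F)) (U m l) := by
          rw [← h22, ← map_mul, ← mul_assoc, mul_inv_cancel₀ h2, one_mul]
        set c := algebraMap F (DualNumber (DualNumber F)) ((2:F)⁻¹ * U m l)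
        set u := algebraMap F (DualNumber (DualNumber F)) (U m l)
        linear_combination (1 : DualNumber (DualNumber F)) * tB_sq (F := F)
          + (c^2 - u*c) * sB_sq (F := F) + (sB F * tB F) * h2c
      · have hB0 : Bv U l i m = 0 := by rw [Bv]; simp [hml, hmi]
        rw [hB0]
        rw [Finset.sum_eq_zero fun j _ => by rw [mul_zero]]
        ring
  exact hle hp

lemma sq_zero_coeff (U : Matrix (Fin n) (Fin n) F) (h2 : (2:F) ≠ 0) (a : Fin n → F)
    (ha : (∑ m, a m • ntGen U m) ^ 2 = 0) {l i : Fin n} (hli : l < i) :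
    a i * (2 * a l + a i * U i l) = 0 := by
  classical
  set χ : NTAlg U →ₐ[F] DualNumber (DualNumber F) :=
    Ideal.Quotient.liftₐ _ (MvPolynomial.aeval (Bv U l i)) (Bv_ker U h2 hli) with hχ
  have hχgen : ∀ m, χ (ntGen U m) = Bv U l i m := by
    intro m
    rw [hχ, ntGen, Ideal.Quotient.liftₐ_apply]
    exact MvPolynomial.aeval_X _ _
  have h0 : χ ((∑ m, a m • ntGen U m) ^ 2) = 0 := by rw [ha, map_zero]
  rw [map_pow, map_sum] at h0
  simp_rw [map_smul, hχgen] at h0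
  have hzero : ∀ m ∈ Finset.univ, m ∉ ({l, i} : Finset (Fin n)) → a m • Bv U l i m = 0 := by
    intro m _ hm
    simp only [Finset.mem_insert, Finset.mem_singleton] at hm
    push_neg at hm
    rw [Bv]
    simp [hm.1, hm.2]
  rw [← Finset.sum_subset (Finset.subset_univ ({l, i} : Finset (Fin n))) hzero,
    Finset.sum_pair (ne_of_lt hli)] at h0
  have hBl : Bv U l i l = sB F := by rw [Bv]; simp
  have hBi : Bv U l i i = tB F
      + algebraMap F (DualNumber (DualNumber F)) ((2:F)⁻¹ * U i l) * sB F := by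
    rw [Bv]; simp [ne_of_gt hli]
  rw [hBl, hBi] at h0
  simp_rw [dd_smul_def] at h0
  have hexp : (algebraMap F (DualNumber (DualNumber F)) (a l) * sB F
      + algebraMap F (DualNumber (DualNumber F)) (a i) * (tB F
      + algebraMap F (DualNumber (DualNumber F)) ((2:F)⁻¹ * U i l) * sB F)) ^ 2
      = algebraMap F (DualNumber (DualNumber F)) (a i * (2 * a l + a i * U i l))
        * (sB F * tB F) := by
    simp only [map_mul, map_add]
    have h22 : algebraMap F (DualNumber (DualNumber F)) (2:F)
        = (2 : DualNumber (DualNumber F)) := map_ofNat _ 2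
    rw [h22]
    have h2c : (2 : DualNumber (DualNumber F)) * algebraMap F (DualNumber (DualNumber F)) (2:F)⁻¹
        = 1 := by rw [← h22, ← map_mul, mul_inv_cancel₀ h2, map_one]
    set A1 := algebraMap F (DualNumber (DualNumber F)) (a l)
    set A2 := algebraMap F (DualNumber (DualNumber F)) (a i)
    set c := algebraMap F (DualNumber (DualNumber F)) (2:F)⁻¹
    set u := algebraMap F (DualNumber (DualNumber F)) (U i l)
    linear_combination (A1^2 + 2*A1*A2*c*u + A2^2*c^2*u^2) * sB_sq (F := F)
      + A2^2 * tB_sq (F := F) + (A2^2*u*(sB F * tB F)) * h2c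
  rw [hexp, ← dd_smul_def] at h0
  exact p_smul _ h0

def Dv (k : Fin n) : Fin n → DualNumber F := fun m => if m = k then DualNumber.eps else 0

lemma Dv_ker (U : Matrix (Fin n) (Fin n) F) (k : Fin n) :
    ∀ p ∈ ntIdeal U, MvPolynomial.aeval (Dv (F := F) k) p = 0 := by
  intro p hp
  have hle : ntIdeal U ≤
      RingHom.ker (MvPolynomial.aeval (R := F) (Dv (F := F) k)).toRingHom := by
    rw [ntIdeal, Ideal.span_le]
    rintro p ⟨m, rfl⟩
    simp only [SetLike.mem_coe, RingHom.mem_ker, AlgHom.toRingHom_eq_coe, RingHom.coe_coe,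
      map_sub, map_pow, map_sum, map_mul, MvPolynomial.aeval_X, MvPolynomial.aeval_C]
    rw [sub_eq_zero]
    rcases eq_or_ne m k with rfl | hmk
    · rw [Finset.sum_eq_zero fun j hj => ?_]
      · rw [show Dv (F := F) m m = DualNumber.eps by rw [Dv]; simp]
        rw [sq, DualNumber.eps_mul_eps]
      · rw [Finset.mem_filter] at hj
        have hjm : j ≠ m := ne_of_lt hj.2
        rw [show Dv (F := F) m j = 0 by rw [Dv]; simp [hjm], mul_zero, zero_mul]
    · rw [show Dv (F := F) k m = 0 by rw [Dv]; simp [hmk]]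
      rw [Finset.sum_eq_zero fun j _ => by rw [mul_zero]]
      ring
  exact hle hp

lemma z0_ker : ∀ p ∈ ntIdeal (0 : Matrix (Fin n) (Fin n) F),
    MvPolynomial.aeval (fun _ : Fin n => (0:F)) p = 0 := by
  intro p hp
  have hle : ntIdeal (0 : Matrix (Fin n) (Fin n) F) ≤
      RingHom.ker (MvPolynomial.aeval (R := F) (fun _ : Fin n => (0:F))).toRingHom := by
    rw [ntIdeal, Ideal.span_le]
    rintro p ⟨i, rfl⟩
    simp only [SetLike.mem_coe, RingHom.mem_ker, AlgHom.toRingHom_eq_coe, RingHom.coe_coe,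
      map_sub, map_pow, map_sum, map_mul, MvPolynomial.aeval_X, MvPolynomial.aeval_C]
    simp
  exact hle hp

theorem reverse_cond (U : Matrix (Fin n) (Fin n) F) (h2 : (2:F) ≠ 0) (hU : SLT U)
    (h : NTIso (0 : Matrix (Fin n) (Fin n) F) U) : Cond2 U := by
  classical
  obtain ⟨e, Γ, hΓ⟩ := h
  intro k j hl hj i hij
  have hiso : ∀ m, (∑ i', Γ i' m • ntGen U i') ^ 2 = 0 := by
    intro m
    rw [← hΓ m, ← map_pow, ntGen_zero_sq, map_zero]
  by_cases hex : ∃ m, Γ k m ≠ 0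
  · obtain ⟨m, hak⟩ := hex
    have hjk : j < k := lt_of_entry_ne hU hl.1
    have hik : i < k := hij.trans hjk
    have c1 := sq_zero_coeff U h2 (fun i' => Γ i' m) (hiso m) hjk
    have c2 := sq_zero_coeff U h2 (fun i' => Γ i' m) (hiso m) hik
    have c3 := sq_zero_coeff U h2 (fun i' => Γ i' m) (hiso m) hij
    have e1 : 2 * Γ j m + Γ k m * U k j = 0 := (mul_eq_zero.mp c1).resolve_left hak
    have e2 : 2 * Γ i m + Γ k m * U k i = 0 := (mul_eq_zero.mp c2).resolve_left hak
    have haj : Γ j m ≠ 0 := by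
      intro h0
      rw [h0] at e1
      have : Γ k m * U k j = 0 := by linear_combination e1
      exact hl.1 ((mul_eq_zero.mp this).resolve_left hak)
    have e3 : 2 * Γ i m + Γ j m * U j i = 0 := (mul_eq_zero.mp c3).resolve_left haj
    have hfin : Γ k m * (2 * U k i + U k j * U j i) = 0 := by
      linear_combination 2 * e2 - 2 * e3 + U j i * e1
    exact (mul_eq_zero.mp hfin).resolve_left hak
  · push_neg at hex
    exfalso
    set χ : NTAlg U →ₐ[F] DualNumber F :=
      Ideal.Quotient.liftₐ _ (MvPolynomial.aeval (Dv k)) (Dv_ker U k) with hχ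
    set z0 : NTAlg (0 : Matrix (Fin n) (Fin n) F) →ₐ[F] F :=
      Ideal.Quotient.liftₐ _ (MvPolynomial.aeval (fun _ => (0:F))) z0_ker with hz0
    have hχgen : ∀ m, χ (ntGen U m) = Dv k m := by
      intro m
      rw [hχ, ntGen, Ideal.Quotient.liftₐ_apply]
      exact MvPolynomial.aeval_X _ _
    have hcomp : χ.comp e.toAlgHom
        = (Algebra.ofId F (DualNumber F)).comp z0 := by
      apply Ideal.Quotient.algHom_ext
      apply MvPolynomial.algHom_ext
      intro m
      simp only [AlgHom.coe_comp, Function.comp_apply, Ideal.Quotient.mkₐ_eq_mk]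
      rw [show (Ideal.Quotient.mk (ntIdeal (0 : Matrix (Fin n) (Fin n) F))) (MvPolynomial.X m)
          = ntGen (0 : Matrix (Fin n) (Fin n) F) m from rfl]
      rw [show e.toAlgHom (ntGen (0 : Matrix (Fin n) (Fin n) F) m)
          = e (ntGen (0 : Matrix (Fin n) (Fin n) F) m) from rfl, hΓ m]
      rw [map_sum]
      simp_rw [map_smul, hχgen]
      rw [Finset.sum_eq_single k]
      · rw [hex m, zero_smul]
        have hz : z0 (ntGen (0 : Matrix (Fin n) (Fin n) F) m) = 0 := by
          rw [hz0, ntGen, Ideal.Quotient.liftₐ_apply]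
          exact MvPolynomial.aeval_X _ _
        rw [hz, map_zero]
      · intro b _ hbk
        rw [show Dv (F := F) k b = 0 by rw [Dv]; simp [hbk], smul_zero]
      · intro hk'
        exact absurd (Finset.mem_univ k) hk'
    have hxk : χ (ntGen U k) = DualNumber.eps := by
      rw [hχgen k, Dv]; simp
    have heq : (DualNumber.eps : DualNumber F)
        = algebraMap F (DualNumber F) (z0 (e.symm (ntGen U k))) := by
      have h1 : χ (e (e.symm (ntGen U k))) = χ (ntGen U k) := by
        rw [AlgEquiv.apply_symm_apply]
      have h2' : χ (e (e.symm (ntGen U k)))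
          = (Algebra.ofId F (DualNumber F)) (z0 (e.symm (ntGen U k))) := by
        have := congrArg (fun f => (f : _ →ₐ[F] _) (e.symm (ntGen U k))) hcomp
        simpa using this
      rw [← hxk, ← h1, h2']
      rfl
    have hsnd := congrArg TrivSqZeroExt.snd heq
    rw [DualNumber.snd_eps, TrivSqZeroExt.algebraMap_eq_inl, TrivSqZeroExt.snd_inl] at hsnd
    exact one_ne_zero hsnd

end Reverse

/-- `A(0ₙ) ≅ A(U)` (degree-preservingly) iff either `u_{kj} = 0` for all `1 < j < k`, or
for every leader `(k,j)` with `j > 1` one has `2u_{ki} + u_{kj}u_{ji} = 0` for all `i < j`. -/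
theorem stmt14 {n : ℕ} (h2 : (2 : F) ≠ 0) (U : Matrix (Fin n) (Fin n) F) (hU : SLT U)
    (hne : U ≠ 0) :
    NTIso (0 : Matrix (Fin n) (Fin n) F) U ↔
      ((∀ j k : Fin n, 0 < j.val → j < k → U k j = 0) ∨
       (∀ k j : Fin n, IsLeader U k j → 0 < j.val →
          ∀ i : Fin n, i < j → 2 * U k i + U k j * U j i = 0)) := by
  constructor
  · intro h
    exact Or.inr (reverse_cond U h2 hU h)
  · rintro (h1 | hC)
    · refine forward_iso U h2 hU ?_
      intro k j hl hj i hij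
      exact absurd (h1 j k hj (lt_of_entry_ne hU hl.1)) hl.1
    · exact forward_iso U h2 hU hC
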